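/- Symmetric Drop theorem. In the abstract symmetrization framework with X carrying the norm ‖·‖_V, let B and C be nonempty closed subsets of S with B convex, B ⊆ X_{ℋ*}, B bounded, and d(B,C) := inf{‖b − c‖_V : b ∈ B, c ∈ C} > 0. Let x ∈ C be such that S' := Drop(x,B) ∩ C is closed, u^H ∈ S' for all u ∈ S' and H ∈ ℋ*, and u* ∈ S' for all u ∈ S'. Then for every sufficiently small ε > 0 (precisely, for all ε ∈ (0, ε₀] with ε₀ > 0 satisfying ε₀·diam(B) < (1−ε₀)·d(B,C)), there exists ξ_ε ∈ Drop(x,B) ∩ C such that Drop(ξ_ε, B) ∩ C = {ξ_ε} and ‖ξ_ε − ξ_ε*‖_V < ε. -/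

import Mathlib

open Filter Topology Metric Set

lemma le_infDist_of {α : Type*} [PseudoMetricSpace α] {s : Set α} (hs : s.Nonempty)
    {x : α} {a : ℝ} (h : ∀ y ∈ s, a ≤ dist x y) : a ≤ Metric.infDist x s := by
  rw [Metric.infDist_eq_iInf]
  haveI := hs.to_subtype
  exact le_ciInf fun y => h y y.2

lemma norm_sub_le₃ {X : Type*} [NormedAddCommGroup X] (a b c : X) :
    ‖a - c‖ ≤ ‖a - b‖ + ‖b - c‖ := by
  simpa [dist_eq_norm] using dist_triangle a b c

def Drop {X : Type*} [NormedAddCommGroup X] [NormedSpace ℝ X] (x : X) (B : Set X) : Set X :=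
  {z : X | ∃ y ∈ B, ∃ t ∈ Set.Icc (0:ℝ) 1, z = x + t • (y - x)}

lemma mem_drop_self {X : Type*} [NormedAddCommGroup X] [NormedSpace ℝ X] {x : X} {B : Set X}
    (hB : B.Nonempty) : x ∈ Drop x B := by
  obtain ⟨b, hb⟩ := hB
  exact ⟨b, hb, 0, ⟨le_refl _, zero_le_one⟩, by simp⟩

lemma drop_trans {X : Type*} [NormedAddCommGroup X] [NormedSpace ℝ X]
    {x z : X} {B : Set X} (hB : Convex ℝ B) (hz : z ∈ Drop x B) :
    Drop z B ⊆ Drop x B := by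
  rintro u ⟨y', hy', s, ⟨hs0, hs1⟩, rfl⟩
  obtain ⟨y, hy, t, ⟨ht0, ht1⟩, rfl⟩ := hz
  by_cases hτ : s + t - s * t = 0
  · have hs : s = 0 := by nlinarith
    have ht : t = 0 := by nlinarith
    refine ⟨y, hy, 0, ⟨le_refl _, zero_le_one⟩, ?_⟩
    simp [hs, ht]
  · have hτ0 : 0 ≤ s + t - s * t := by nlinarith
    have hτpos : 0 < s + t - s * t := lt_of_le_of_ne hτ0 (Ne.symm hτ)
    have hτ1 : s + t - s * t ≤ 1 := by nlinarith
    refine ⟨(t * (1 - s) / (s + t - s * t)) • y + (s / (s + t - s * t)) • y',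
      hB hy hy' (div_nonneg (by nlinarith) hτpos.le) (div_nonneg hs0 hτpos.le)
        (by rw [← add_div, div_eq_one_iff_eq hτpos.ne']; ring), s + t - s * t, ⟨hτ0, hτ1⟩, ?_⟩
    match_scalars
    · ring
    · simp only [mul_one, mul_div_cancel₀ _ hτpos.ne']; ring
    · simp only [mul_one, mul_div_cancel₀ _ hτpos.ne']

theorem symmetric_drop
    {X : Type*} [NormedAddCommGroup X] [NormedSpace ℝ X] [CompleteSpace X]
    (S : Set X)
    {P : Type*} [TopologicalSpace P] [PathConnectedSpace P]
    (pol : X → P → X) (sy : X → X)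
    (hpolS : ∀ u ∈ S, ∀ H : P, pol u H ∈ S)
    (hsyS : ∀ u : X, sy u ∈ S)
    (hpolCont : ContinuousOn (fun q : X × P => pol q.1 q.2) (S ×ˢ Set.univ))
    (hsypol : ∀ u ∈ S, ∀ H : P,
      pol (sy u) H = sy u ∧ sy (pol u H) = sy u ∧ pol (pol u H) H = pol u H)
    (happrox : ∃ Hs : ℕ → P, ∀ u ∈ S,
      Filter.Tendsto (fun m => List.foldl pol u ((List.range m).map Hs))
        Filter.atTop (nhds (sy u)))
    (hpolContr : ∀ u ∈ S, ∀ v ∈ S, ∀ H : P, ‖pol u H - pol v H‖ ≤ ‖u - v‖)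
    (Θ : X → X) (CΘ : ℝ) (hCΘ : 0 < CΘ)
    (hΘS : ∀ u : X, Θ u ∈ S) (hΘid : ∀ u ∈ S, Θ u = u)
    (hΘlip : ∀ u v : X, ‖Θ u - Θ v‖ ≤ CΘ * ‖u - v‖)
    (hpolext : ∀ u : X, ∀ H : P, pol u H = pol (Θ u) H)
    (hsyext : ∀ u : X, sy u = sy (Θ u))
    (B C : Set X) (hBne : B.Nonempty) (hCne : C.Nonempty)
    (hBS : B ⊆ S) (hCS : C ⊆ S) (hBclosed : IsClosed B) (hCclosed : IsClosed C)
    (hBconv : Convex ℝ B) (hBbdd : Bornology.IsBounded B)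
    (hBH : ∀ b ∈ B, ∀ H : P, pol b H = b)
    (dBC : ℝ) (hdBC : dBC = sInf ((fun q : X × X => ‖q.1 - q.2‖) '' B ×ˢ C))
    (hdpos : 0 < dBC)
    (x : X) (hx : x ∈ C)
    (hS'closed : IsClosed (Drop x B ∩ C))
    (hS'pol : ∀ u ∈ Drop x B ∩ C, ∀ H : P, pol u H ∈ Drop x B ∩ C)
    (hS'sy : ∀ u ∈ Drop x B ∩ C, sy u ∈ Drop x B ∩ C)
    (ε₀ : ℝ) (hε₀ : 0 < ε₀) (hε₀small : ε₀ * Metric.diam B < (1 - ε₀) * dBC) :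
    ∀ ε ∈ Set.Ioc (0:ℝ) ε₀,
      ∃ ξ ∈ Drop x B ∩ C, Drop ξ B ∩ C = {ξ} ∧ ‖ξ - sy ξ‖ < ε := by
  classical
  obtain ⟨b₀, hb₀⟩ := hBne
  have hBne' : B.Nonempty := ⟨b₀, hb₀⟩
  obtain ⟨Hs, hHs⟩ := happrox
  intro ε hεmem
  obtain ⟨hε0, hεε₀⟩ := hεmem
  set D := Metric.diam B with hD
  have hD0 : 0 ≤ D := Metric.diam_nonneg
  have hε1 : ε * (dBC + D) < dBC := by
    nlinarith [mul_le_mul_of_nonneg_right hεε₀ hD0,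
      mul_le_mul_of_nonneg_right hεε₀ hdpos.le]
  have hεlt1 : ε < 1 := by nlinarith
  set f : X → ℝ := fun u => Metric.infDist u B with hfdef
  have hfcont : Continuous f := Metric.continuous_infDist_pt B
  have hf0 : ∀ u, 0 ≤ f u := fun u => Metric.infDist_nonneg
  have hdlow : ∀ b ∈ B, ∀ c ∈ C, dBC ≤ ‖b - c‖ := by
    intro b hb c hc
    rw [hdBC]
    apply csInf_le
    · exact ⟨0, by rintro a ⟨q, hq, rfl⟩; exact norm_nonneg _⟩
    · exact ⟨(b, c), ⟨hb, hc⟩, rfl⟩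
  have hfC : ∀ c ∈ C, dBC ≤ f c := fun c hc =>
    le_infDist_of hBne' (fun b hb => by
      rw [dist_eq_norm, norm_sub_rev]; exact hdlow b hb c hc)
  set S' := Drop x B ∩ C with hS'def
  have hxS' : x ∈ S' := ⟨mem_drop_self hBne', hx⟩
  have hS'S : S' ⊆ S := fun u hu => hCS hu.2
  -- foldl facts
  have hGsucc : ∀ (u : X) (m : ℕ),
      List.foldl pol u ((List.range (m+1)).map Hs)
        = pol (List.foldl pol u ((List.range m).map Hs)) (Hs m) := by
    intro u m
    rw [List.range_succ]
    simp
  have hGS : ∀ u ∈ S, ∀ m, List.foldl pol u ((List.range m).map Hs) ∈ S := by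
    intro u hu m
    induction m with
    | zero => simpa using hu
    | succ m ih => rw [hGsucc]; exact hpolS _ ih _
  have hGcontr : ∀ u ∈ S, ∀ v ∈ S, ∀ m,
      ‖List.foldl pol u ((List.range m).map Hs) - List.foldl pol v ((List.range m).map Hs)‖
        ≤ ‖u - v‖ := by
    intro u hu v hv m
    induction m with
    | zero => simp
    | succ m ih =>
      rw [hGsucc, hGsucc]
      exact (hpolContr _ (hGS u hu m) _ (hGS v hv m) _).trans ih
  have hsyNonexp : ∀ u ∈ S, ∀ v ∈ S, ‖sy u - sy v‖ ≤ ‖u - v‖ := by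
    intro u hu v hv
    have h1 : Tendsto (fun m => ‖List.foldl pol u ((List.range m).map Hs)
        - List.foldl pol v ((List.range m).map Hs)‖) atTop (nhds ‖sy u - sy v‖) :=
      ((hHs u hu).sub (hHs v hv)).norm
    exact le_of_tendsto h1 (Filter.Eventually.of_forall fun m => hGcontr u hu v hv m)
  have hfpol : ∀ u ∈ S, ∀ H : P, f (pol u H) ≤ f u := by
    intro u hu H
    apply le_infDist_of hBne'
    intro b hb
    calc f (pol u H) ≤ dist (pol u H) b := Metric.infDist_le_dist_of_mem hb
      _ = ‖pol u H - pol b H‖ := by rw [dist_eq_norm, hBH b hb H]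
      _ ≤ ‖u - b‖ := hpolContr u hu b (hBS hb) H
      _ = dist u b := (dist_eq_norm u b).symm
  have hfG : ∀ u ∈ S, ∀ m, f (List.foldl pol u ((List.range m).map Hs)) ≤ f u := by
    intro u hu m
    induction m with
    | zero => simp
    | succ m ih => rw [hGsucc]; exact (hfpol _ (hGS u hu m) _).trans ih
  have hfsy : ∀ u ∈ S, f (sy u) ≤ f u := by
    intro u hu
    have h1 : Tendsto (fun m => f (List.foldl pol u ((List.range m).map Hs)))
        atTop (nhds (f (sy u))) := (hfcont.tendsto _).comp (hHs u hu)
    exact le_of_tendsto h1 (Filter.Eventually.of_forall fun m => hfG u hu m)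
  have hsyfix : ∀ u ∈ S, sy (sy u) = sy u := by
    intro u hu
    have h1 : ∀ m : ℕ, List.foldl pol (sy u) ((List.range m).map Hs) = sy u := by
      intro m
      induction m with
      | zero => simp
      | succ m ih => rw [hGsucc, ih]; exact (hsypol u hu (Hs m)).1
    have h2 := (hHs (sy u) (hsyS u)).congr h1
    exact tendsto_nhds_unique h2 tendsto_const_nhds
  -- the Ekeland sets
  set T : X → Set X := fun v => {w | w ∈ S' ∧ f w + ε * ‖w - v‖ ≤ f v} with hTdef
  have hTself : ∀ v ∈ S', v ∈ T v := fun v hv => ⟨hv, by simp⟩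
  have hTbdd : ∀ v : X, BddBelow (f '' T v) :=
    fun v => ⟨0, by rintro a ⟨w, hw, rfl⟩; exact hf0 w⟩
  have key : ∀ (v : {v : X // v ∈ S' ∧ sy v = v}) (n : ℕ),
      ∃ w : {w : X // w ∈ S' ∧ sy w = w},
        (w : X) ∈ T (v : X) ∧ f (w : X) ≤ sInf (f '' T (v : X)) + (1/2)^n := by
    rintro ⟨v, hvS', hvsy⟩ n
    have hne : (f '' T v).Nonempty := ⟨f v, v, hTself v hvS', rfl⟩
    obtain ⟨a, ⟨w, hwT, rfl⟩, ha⟩ := Real.lt_sInf_add_pos hne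
      (show (0:ℝ) < (1/2)^n by positivity)
    refine ⟨⟨sy w, hS'sy w hwT.1, hsyfix w (hS'S hwT.1)⟩, ⟨hS'sy w hwT.1, ?_⟩, ?_⟩
    · have h1 : ‖sy w - v‖ ≤ ‖w - v‖ := by
        calc ‖sy w - v‖ = ‖sy w - sy v‖ := by rw [hvsy]
          _ ≤ ‖w - v‖ := hsyNonexp w (hS'S hwT.1) v (hS'S hvS')
      have h2 := hfsy w (hS'S hwT.1)
      have h3 := hwT.2
      nlinarith [hε0]
    · exact le_trans (hfsy w (hS'S hwT.1)) ha.le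
  -- the recursive sequence
  let useq : ℕ → {v : X // v ∈ S' ∧ sy v = v} := fun n =>
    Nat.rec ⟨sy x, hS'sy x hxS', hsyfix x (hCS hx)⟩ (fun n v => (key v n).choose) n
  let u : ℕ → X := fun n => (useq n).1
  have hmem : ∀ n, u n ∈ S' := fun n => (useq n).2.1
  have hsyu : ∀ n, sy (u n) = u n := fun n => (useq n).2.2
  have huP : ∀ n, u (n+1) ∈ T (u n) ∧ f (u (n+1)) ≤ sInf (f '' T (u n)) + (1/2)^n :=
    fun n => (key (useq n) n).choose_spec
  have htel : ∀ n m, n ≤ m → f (u m) + ε * ‖u m - u n‖ ≤ f (u n) := by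
    intro n m h
    induction m, h using Nat.le_induction with
    | base => simp
    | succ m hm ih =>
      have h2 := (huP m).1.2
      have tri : ‖u (m+1) - u n‖ ≤ ‖u (m+1) - u m‖ + ‖u m - u n‖ := norm_sub_le₃ _ _ _
      nlinarith [hε0]
  have hanti : Antitone (fun n => f (u n)) := by
    intro a b hab
    have := htel a b hab
    nlinarith [mul_nonneg hε0.le (norm_nonneg (u b - u a))]
  have hbdd : BddBelow (Set.range fun n => f (u n)) :=
    ⟨0, by rintro a ⟨n, rfl⟩; exact hf0 _⟩
  set L := ⨅ n, f (u n) with hLdef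
  have htendf : Tendsto (fun n => f (u n)) atTop (nhds L) := tendsto_atTop_ciInf hanti hbdd
  have hLle : ∀ n, L ≤ f (u n) := fun n => ciInf_le hbdd n
  have hcauchy : CauchySeq u := by
    apply cauchySeq_of_le_tendsto_0 (fun N => (f (u N) - L) / ε)
    · have main : ∀ n m N : ℕ, N ≤ n → N ≤ m → n ≤ m →
          dist (u n) (u m) ≤ (f (u N) - L) / ε := by
        intro n m N hn _ hnm
        rw [le_div_iff₀ hε0]
        have h1 := htel n m hnm
        have h2 := hanti hn
        have h3 := hLle m
        have h4 : dist (u n) (u m) = ‖u m - u n‖ := by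
          rw [dist_eq_norm, norm_sub_rev]
        nlinarith
      intro n m N hn hm
      rcases le_total n m with h | h
      · exact main n m N hn hm h
      · rw [dist_comm]; exact main m n N hm hn h
    · have h1 : Tendsto (fun N => (f (u N) - L) / ε) atTop (nhds ((L - L) / ε)) :=
        (htendf.sub tendsto_const_nhds).div_const ε
      simpa using h1
  obtain ⟨ξ, hξ⟩ := cauchySeq_tendsto_of_complete hcauchy
  have hξS' : ξ ∈ S' := hS'closed.mem_of_tendsto hξ (Filter.Eventually.of_forall hmem)
  have hξS : ξ ∈ S := hS'S hξS'
  have hsyξ : ‖ξ - sy ξ‖ ≤ 0 := by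
    have h1 : Tendsto (fun n => ‖ξ - u n‖ + ‖u n - ξ‖) atTop (nhds 0) := by
      have h2 : Tendsto (fun n => ‖ξ - u n‖ + ‖u n - ξ‖) atTop
          (nhds (‖ξ - ξ‖ + ‖ξ - ξ‖)) :=
        ((tendsto_const_nhds.sub hξ).norm).add ((hξ.sub tendsto_const_nhds).norm)
      simpa using h2
    apply ge_of_tendsto h1
    apply Filter.Eventually.of_forall
    intro n
    have h3 : ‖u n - sy ξ‖ = ‖sy (u n) - sy ξ‖ := by rw [hsyu]
    have h4 : ‖sy (u n) - sy ξ‖ ≤ ‖u n - ξ‖ := hsyNonexp _ (hS'S (hmem n)) _ hξS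
    calc ‖ξ - sy ξ‖ ≤ ‖ξ - u n‖ + ‖u n - sy ξ‖ := norm_sub_le₃ _ _ _
      _ ≤ ‖ξ - u n‖ + ‖u n - ξ‖ := by rw [h3]; linarith
  have hξT : ∀ n, f ξ + ε * ‖ξ - u n‖ ≤ f (u n) := by
    intro n
    have h1 : Tendsto (fun m => f (u m) + ε * ‖u m - u n‖) atTop
        (nhds (f ξ + ε * ‖ξ - u n‖)) :=
      (((hfcont.tendsto ξ).comp hξ)).add (((hξ.sub tendsto_const_nhds).norm).const_mul ε)
    apply le_of_tendsto h1
    exact eventually_atTop.mpr ⟨n, fun m hm => htel n m hm⟩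
  have hmin : ∀ v ∈ S', f v + ε * ‖v - ξ‖ ≤ f ξ → v = ξ := by
    intro v hv hvle
    have hvT : ∀ n, v ∈ T (u n) := by
      intro n
      refine ⟨hv, ?_⟩
      have tri : ‖v - u n‖ ≤ ‖v - ξ‖ + ‖ξ - u n‖ := norm_sub_le₃ _ _ _
      have h2 := hξT n
      nlinarith [hε0]
    have h2 : ∀ n, ε * ‖v - u (n+1)‖ ≤ (1/2)^n := by
      intro n
      have h3 : sInf (f '' T (u n)) ≤ f v := csInf_le (hTbdd _) ⟨v, hvT n, rfl⟩
      have h4 := (huP n).2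
      have h5 := (hvT (n+1)).2
      linarith
    have h6 : ‖v - ξ‖ ≤ 0 := by
      have hA : Tendsto (fun n : ℕ => ‖v - u (n+1)‖) atTop (nhds ‖v - ξ‖) := by
        have h0 : Tendsto (fun n : ℕ => u (n+1)) atTop (nhds ξ) :=
          hξ.comp (tendsto_add_atTop_nat 1)
        exact (tendsto_const_nhds.sub h0).norm
      have hB : Tendsto (fun n : ℕ => ((1:ℝ)/2)^n / ε) atTop (nhds 0) := by
        have := (tendsto_pow_atTop_nhds_zero_of_lt_one (by norm_num : (0:ℝ) ≤ 1/2)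
          (by norm_num : (1:ℝ)/2 < 1)).div_const ε
        simpa using this
      have hle : ∀ n : ℕ, ‖v - u (n+1)‖ ≤ ((1:ℝ)/2)^n / ε := by
        intro n
        rw [le_div_iff₀ hε0]
        nlinarith [h2 n]
      exact le_of_tendsto_of_tendsto' hA hB hle
    have h7 : v - ξ = 0 := norm_le_zero_iff.mp h6
    exact sub_eq_zero.mp h7
  -- conclusion
  refine ⟨ξ, hξS', ?_, lt_of_le_of_lt hsyξ hε0⟩
  apply Set.eq_singleton_iff_unique_mem.mpr
  refine ⟨⟨mem_drop_self hBne', hξS'.2⟩, ?_⟩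
  rintro v ⟨hvDrop, hvC⟩
  obtain ⟨b, hb, t, ⟨ht0, ht1⟩, rfl⟩ := hvDrop
  set v := ξ + t • (b - ξ) with hvdef
  have hvS' : v ∈ S' := ⟨drop_trans hBconv hξS'.1 ⟨b, hb, t, ⟨ht0, ht1⟩, rfl⟩, hvC⟩
  have hfξlow : dBC ≤ f ξ := hfC ξ hξS'.2
  -- f v ≤ (1-t) * f ξ
  have hfv1 : f v ≤ (1 - t) * f ξ := by
    rcases eq_or_lt_of_le ht1 with h1 | h1
    · have hvb : v = b := by rw [hvdef, h1]; module
      rw [hvb, h1]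
      simp [hfdef, Metric.infDist_zero_of_mem hb]
    · have h2 : ∀ b' ∈ B, f v ≤ (1 - t) * dist ξ b' := by
        intro b' hb'
        have hmemB : (1 - t) • b' + t • b ∈ B :=
          hBconv hb' hb (by linarith) ht0 (by ring)
        calc f v ≤ dist v ((1 - t) • b' + t • b) := Metric.infDist_le_dist_of_mem hmemB
          _ = (1 - t) * dist ξ b' := by
            rw [dist_eq_norm, dist_eq_norm]
            have h3 : v - ((1 - t) • b' + t • b) = (1 - t) • (ξ - b') := by
              rw [hvdef]; module
            rw [h3, norm_smul, Real.norm_of_nonneg (by linarith : (0:ℝ) ≤ 1 - t)]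
      have h4 : f v / (1 - t) ≤ f ξ := by
        apply le_infDist_of hBne'
        intro b' hb'
        rw [div_le_iff₀ (by linarith : (0:ℝ) < 1 - t)]
        calc f v ≤ (1 - t) * dist ξ b' := h2 b' hb'
          _ = dist ξ b' * (1 - t) := by ring
      calc f v = f v / (1 - t) * (1 - t) :=
          (div_mul_cancel₀ (f v) (ne_of_gt (by linarith : (0:ℝ) < 1 - t))).symm
        _ ≤ f ξ * (1 - t) := by
          apply mul_le_mul_of_nonneg_right h4 (by linarith : (0:ℝ) ≤ 1 - t)
        _ = (1 - t) * f ξ := by ring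
  have hnorm1 : ‖v - ξ‖ = t * ‖b - ξ‖ := by
    have h1 : v - ξ = t • (b - ξ) := by rw [hvdef]; module
    rw [h1, norm_smul, Real.norm_of_nonneg ht0]
  have hnorm2 : ‖b - ξ‖ ≤ f ξ + D := by
    have h1 : ‖b - ξ‖ - D ≤ f ξ := by
      apply le_infDist_of hBne'
      intro b' hb'
      have h2 : ‖b - b'‖ ≤ D := by
        have := Metric.dist_le_diam_of_mem hBbdd hb hb'
        rwa [dist_eq_norm] at this
      have h3 : ‖b - ξ‖ ≤ ‖b - b'‖ + ‖b' - ξ‖ := norm_sub_le₃ _ _ _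
      have h4 : dist ξ b' = ‖b' - ξ‖ := by rw [dist_eq_norm, norm_sub_rev]
      linarith
    linarith
  have hεfξ : ε * (f ξ + D) ≤ f ξ := by
    nlinarith [mul_nonneg (by linarith : (0:ℝ) ≤ 1 - ε) (by linarith : (0:ℝ) ≤ f ξ - dBC)]
  have hkey : f v + ε * ‖v - ξ‖ ≤ f ξ := by
    have e1 : ε * ‖v - ξ‖ ≤ t * f ξ := by
      rw [hnorm1]
      calc ε * (t * ‖b - ξ‖) = t * (ε * ‖b - ξ‖) := by ring
        _ ≤ t * (ε * (f ξ + D)) :=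
          mul_le_mul_of_nonneg_left (mul_le_mul_of_nonneg_left hnorm2 hε0.le) ht0
        _ ≤ t * f ξ := mul_le_mul_of_nonneg_left hεfξ ht0
    nlinarith
  exact hmin v hvS' hkey
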